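/- arXiv:1904.10302 — 2 statements merged into one kernel-verified Lean document; each statement's English description precedes it below -/
import Mathlib

section
/- If in a residuated lattice every coannulet x^⊥ is a principal filter, then the residuated lattice is quasicomplemented. -/
/-- A (bounded, integral, commutative) residuated lattice. -/
class ResLattice (A : Type*) extends Lattice A, CommMonoid A, OrderBot A where
  himp : A → A → A
  adjunction : ∀ x y z : A, x * y ≤ z ↔ x ≤ himp y z
  le_one : ∀ x : A, x ≤ 1

variable {A : Type*} [ResLattice A]

/-- Coannihilator of a subset: `X^⊥ = {a | a ⊔ x = 1 for all x ∈ X}`. -/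
def Coann (X : Set A) : Set A := {a | ∀ x ∈ X, a ⊔ x = 1}

/-- Coannulet of an element: `x^⊥`. -/
def rperp (x : A) : Set A := Coann {x}

/-- The principal filter generated by `x`. -/
def PFil (x : A) : Set A := {a | ∃ n : ℕ, 0 < n ∧ x ^ n ≤ a}

/-- Filters of a residuated lattice. -/
def IsRLFilter (F : Set A) : Prop :=
  F.Nonempty ∧ (∀ x ∈ F, ∀ y ∈ F, x * y ∈ F) ∧ (∀ x ∈ F, ∀ y : A, x ⊔ y ∈ F)

/-- Prime filters. -/
def IsRLPrime (P : Set A) : Prop :=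
  IsRLFilter P ∧ P ≠ Set.univ ∧ ∀ x y : A, x ⊔ y ∈ P → x ∈ P ∨ y ∈ P

/-- Minimal prime filters. -/
def IsRLMinPrime (P : Set A) : Prop :=
  IsRLPrime P ∧ ∀ Q : Set A, IsRLPrime Q → Q ⊆ P → Q = P

/-- Quasicomplemented residuated lattice. -/
def Quasicomplemented (A : Type*) [ResLattice A] : Prop :=
  ∀ x : A, ∃ y : A, Coann (rperp x) = rperp y

/-- α-filters. -/
def IsAlphaFilter (F : Set A) : Prop :=
  IsRLFilter F ∧ ∀ x ∈ F, Coann (rperp x) ⊆ F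

/-- The α-filter generated by a subset. -/
def alphaGen (X : Set A) : Set A := ⋂₀ {G : Set A | IsAlphaFilter G ∧ X ⊆ G}

lemma RL.mul_le_mul_right' {a b : A} (h : a ≤ b) (c : A) : a * c ≤ b * c := by
  have hb : b ≤ ResLattice.himp c (b * c) := (ResLattice.adjunction b c (b * c)).mp le_rfl
  exact (ResLattice.adjunction a c (b * c)).mpr (le_trans h hb)

lemma RL.mul_mono {a b c d : A} (h1 : a ≤ b) (h2 : c ≤ d) : a * c ≤ b * d := by
  calc a * c ≤ b * c := RL.mul_le_mul_right' h1 c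
    _ = c * b := mul_comm _ _
    _ ≤ d * b := RL.mul_le_mul_right' h2 b
    _ = b * d := mul_comm _ _

lemma RL.sup_mul_one {a y z : A} (hy : a ⊔ y = 1) (hz : a ⊔ z = 1) :
    a ⊔ y * z = 1 := by
  have ha : ∀ w : A, a * w ≤ a ⊔ y * z := fun w => by
    calc a * w ≤ a * 1 := RL.mul_mono le_rfl (ResLattice.le_one w)
      _ = a := mul_one a
      _ ≤ a ⊔ y * z := le_sup_left
  have key : (a ⊔ y) * (a ⊔ z) ≤ a ⊔ y * z := by
    refine (ResLattice.adjunction _ _ _).mpr (sup_le ?_ ?_)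
    · exact (ResLattice.adjunction _ _ _).mp (ha _)
    · refine (ResLattice.adjunction _ _ _).mp ?_
      rw [mul_comm]
      refine (ResLattice.adjunction _ _ _).mpr (sup_le ?_ ?_) <;>
        refine (ResLattice.adjunction _ _ _).mp ?_
      · exact ha y
      · rw [mul_comm]; exact le_sup_right
  apply le_antisymm (ResLattice.le_one _)
  calc (1 : A) = (a ⊔ y) * (a ⊔ z) := by rw [hy, hz, one_mul]
    _ ≤ a ⊔ y * z := key

lemma RL.sup_pow_one {a y : A} (hy : a ⊔ y = 1) : ∀ n : ℕ, 0 < n → a ⊔ y ^ n = 1 := by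
  intro n hn
  induction n with
  | zero => exact absurd hn (lt_irrefl 0)
  | succ m ih =>
    rcases Nat.eq_zero_or_pos m with hm | hm
    · subst hm; simpa using hy
    · rw [pow_succ]
      exact RL.sup_mul_one (ih hm) hy

theorem stmt3 (h : ∀ x : A, ∃ y : A, rperp x = PFil y) :
    Quasicomplemented A := by
  intro x
  obtain ⟨y, hy⟩ := h x
  refine ⟨y, Set.ext fun a => ?_⟩
  have hyx : y ∈ rperp x := by
    rw [hy]; exact ⟨1, Nat.one_pos, by simp⟩
  constructor
  · intro ha
    intro b hb
    rw [show b = y from hb]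
    exact ha y hyx
  · intro ha b hb
    have hay : a ⊔ y = 1 := ha y rfl
    rw [hy] at hb
    obtain ⟨n, hn, hnb⟩ := hb
    have h1 : a ⊔ y ^ n = 1 := RL.sup_pow_one hay n hn
    apply le_antisymm (ResLattice.le_one _)
    calc (1 : A) = a ⊔ y ^ n := h1.symm
      _ ≤ a ⊔ b := sup_le_sup_left hnb a
end

section
/- In a residuated lattice, the α-filter generated by a filter F equals the union of x^⊥⊥ over all x ∈ F; i.e., α(F) = ⋃_{x∈F} x^⊥⊥. -/
variable {A : Type*} [ResLattice A]

lemma RL.mul_mono_right (x : A) {y z : A} (h : y ≤ z) : x * y ≤ x * z := by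
  have hz : z ≤ ResLattice.himp x (x * z) := by
    rw [← ResLattice.adjunction, mul_comm]
  calc x * y = y * x := mul_comm _ _
    _ ≤ x * z := (ResLattice.adjunction y x (x * z)).mpr (le_trans h hz)

lemma RL.mul_le_left (x y : A) : x * y ≤ x := by
  have := RL.mul_mono_right x (ResLattice.le_one y)
  simpa using this

lemma RL.mul_le_right (x y : A) : x * y ≤ y := by
  rw [mul_comm]; exact RL.mul_le_left y x

lemma RL.mul_sup_le (a b c : A) : a * (b ⊔ c) ≤ a * b ⊔ a * c := by
  have hb : b ≤ ResLattice.himp a (a * b ⊔ a * c) := by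
    rw [← ResLattice.adjunction, mul_comm]; exact le_sup_left
  have hc : c ≤ ResLattice.himp a (a * b ⊔ a * c) := by
    rw [← ResLattice.adjunction, mul_comm]; exact le_sup_right
  calc a * (b ⊔ c) = (b ⊔ c) * a := mul_comm _ _
    _ ≤ a * b ⊔ a * c := (ResLattice.adjunction _ _ _).mpr (sup_le hb hc)

lemma RL.sup_mul_one_s11 {a b c : A} (ha : a ⊔ c = 1) (hb : b ⊔ c = 1) :
    a * b ⊔ c = 1 := by
  have h1 : (1 : A) = (a ⊔ c) * (b ⊔ c) := by rw [ha, hb, mul_one]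
  have h2 : (a ⊔ c) * (b ⊔ c) ≤ a * b ⊔ c := by
    calc (a ⊔ c) * (b ⊔ c) ≤ (a ⊔ c) * b ⊔ (a ⊔ c) * c := RL.mul_sup_le _ _ _
      _ ≤ (b * a ⊔ b * c) ⊔ c := by
          refine sup_le (le_trans ?_ le_sup_left) (le_trans (RL.mul_le_right _ _) le_sup_right)
          rw [mul_comm]; exact RL.mul_sup_le b a c
      _ ≤ a * b ⊔ c := by
          refine sup_le (sup_le ?_ ?_) le_sup_right
          · rw [mul_comm]; exact le_sup_left
          · exact le_trans (RL.mul_le_right b c) le_sup_right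
  exact le_antisymm (ResLattice.le_one _) (h1 ▸ h2)

lemma RL.mem_dperp {x a : A} : a ∈ Coann (rperp x) ↔ ∀ c : A, c ⊔ x = 1 → a ⊔ c = 1 := by
  simp [Coann, rperp]

lemma RL.self_mem_dperp (x : A) : x ∈ Coann (rperp x) := by
  rw [RL.mem_dperp]
  intro c hc
  rw [sup_comm]; exact hc

theorem stmt11 (F : Set A) (hF : IsRLFilter F) :
    alphaGen F = ⋃ x ∈ F, Coann (rperp x) := by
  obtain ⟨hne, hmul, hsup⟩ := hF
  set S : Set A := ⋃ x ∈ F, Coann (rperp x) with hS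
  have hFS : F ⊆ S := fun x hx =>
    Set.mem_biUnion hx (RL.self_mem_dperp x)
  have hSfil : IsRLFilter S := by
    refine ⟨hne.mono hFS, ?_, ?_⟩
    · rintro a ha b hb
      obtain ⟨x, hx, hax⟩ := Set.mem_iUnion₂.mp ha
      obtain ⟨y, hy, hby⟩ := Set.mem_iUnion₂.mp hb
      refine Set.mem_biUnion (hmul x hx y hy) ?_
      rw [RL.mem_dperp]
      intro c hc
      have hcx : c ⊔ x = 1 := le_antisymm (ResLattice.le_one _)
        (hc ▸ sup_le_sup_left (RL.mul_le_left x y) c)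
      have hcy : c ⊔ y = 1 := le_antisymm (ResLattice.le_one _)
        (hc ▸ sup_le_sup_left (RL.mul_le_right x y) c)
      have h1 := RL.mem_dperp.mp hax c hcx
      have h2 := RL.mem_dperp.mp hby c hcy
      exact RL.sup_mul_one_s11 h1 h2
    · rintro a ha b
      obtain ⟨x, hx, hax⟩ := Set.mem_iUnion₂.mp ha
      refine Set.mem_biUnion hx ?_
      rw [RL.mem_dperp]
      intro c hc
      have h1 := RL.mem_dperp.mp hax c hc
      exact le_antisymm (ResLattice.le_one _) (h1 ▸ sup_le_sup_right le_sup_left c)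
  have hSalpha : IsAlphaFilter S := by
    refine ⟨hSfil, ?_⟩
    intro a ha b hb
    obtain ⟨x, hx, hax⟩ := Set.mem_iUnion₂.mp ha
    refine Set.mem_biUnion hx ?_
    rw [RL.mem_dperp] at hb ⊢
    intro c hc
    -- c ∈ x^⊥ ⟹ c ∈ a^⊥ since a ∈ x^⊥⊥
    have hca : c ⊔ a = 1 := by
      rw [sup_comm]; exact RL.mem_dperp.mp hax c hc
    exact hb c hca
  apply le_antisymm
  · exact Set.sInter_subset_of_mem ⟨hSalpha, hFS⟩
  · intro a ha G hG
    obtain ⟨⟨hGα, hGperp⟩, hFG⟩ := hG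
    obtain ⟨x, hx, hax⟩ := Set.mem_iUnion₂.mp ha
    exact hGperp x (hFG hx) hax
end
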